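/- Let F be a finite field, r ≤ m positive integers, and A an r × m matrix over F of rank r. For n ∈ ℕ let S'(n) = {s : Fin m → Fⁿ : ∀ i, Σ_j A i j • s j = 0} and let S⁰(n) = {s ∈ S'(n) : finrank of the F-linear span of {s j} equals m − r} be the set of fully dimensional solutions. Then |S⁰(n)| / |S'(n)| → 1 as n → ∞. -/

import Mathlib

open Filter Module Submodule Set

section Counting

variable (F K : Type*) [Field F] [Fintype F] [AddCommGroup K] [Module F K]
  [FiniteDimensional F K]

lemma aux_card_nonspanning_le (n : ℕ) :
    Nat.card {t : Fin n → K // Submodule.span F (Set.range t) ≠ ⊤} ≤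
      Fintype.card F ^ (finrank F K) * (Fintype.card F ^ (finrank F K - 1)) ^ n := by
  classical
  haveI : Finite K := Module.finite_of_finite F
  haveI : Finite (Module.Dual F K) := Module.finite_of_finite F
  haveI : Fintype (Module.Dual F K) := Fintype.ofFinite _
  haveI : Fintype K := Fintype.ofFinite _
  set q := Fintype.card F with hq
  set d := finrank F K with hd
  set Sg := (Σ f : {f : Module.Dual F K // f ≠ 0}, (Fin n → LinearMap.ker f.1)) with hSg
  have step1 : Nat.card {t : Fin n → K // Submodule.span F (Set.range t) ≠ ⊤} ≤ Nat.card Sg := by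
    have hex : ∀ t : {t : Fin n → K // Submodule.span F (Set.range t) ≠ ⊤},
        ∃ f : Module.Dual F K, f ≠ 0 ∧ (Submodule.span F (Set.range t.1)).map f = ⊥ :=
      fun t => Submodule.exists_dual_map_eq_bot_of_lt_top (lt_top_iff_ne_top.2 t.2) inferInstance
    choose f hf0 hfbot using hex
    refine Nat.card_le_card_of_injective
      (fun t => (⟨⟨f t, hf0 t⟩, fun k => ⟨t.1 k, by
        rw [LinearMap.mem_ker, ← Submodule.mem_bot (R := F), ← hfbot t]
        exact Submodule.mem_map_of_mem (Submodule.subset_span (Set.mem_range_self k))⟩⟩ : Sg)) ?_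
    intro t₁ t₂ h
    have h' := congrArg (fun x : Sg => (fun k => (x.2 k : K))) h
    exact Subtype.ext (funext fun k => congrFun h' k)
  have hker : ∀ f : {f : Module.Dual F K // f ≠ 0},
      Fintype.card (LinearMap.ker f.1) = q ^ (d - 1) := by
    intro f
    have hrange : LinearMap.range f.1 = ⊤ := by
      obtain ⟨x, hx⟩ : ∃ x, f.1 x ≠ 0 := by
        by_contra h; push_neg at h; exact f.2 (LinearMap.ext fun x => h x)
      rw [LinearMap.range_eq_top]
      intro c
      exact ⟨(c / f.1 x) • x, by simp [div_mul_cancel₀, hx]⟩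
    have h1 : finrank F (LinearMap.range f.1) = 1 := by rw [hrange]; simp
    have h2 := LinearMap.finrank_range_add_finrank_ker f.1
    rw [h1] at h2
    have h3 : finrank F (LinearMap.ker f.1) = d - 1 := by omega
    rw [card_eq_pow_finrank (K := F), h3]
  have step2 : Nat.card Sg ≤ q ^ d * (q ^ (d - 1)) ^ n := by
    rw [Nat.card_eq_fintype_card, Fintype.card_sigma]
    have heach : ∀ f : {f : Module.Dual F K // f ≠ 0},
        Fintype.card (Fin n → LinearMap.ker f.1) = (q ^ (d - 1)) ^ n := by
      intro f
      rw [Fintype.card_fun, hker f, Fintype.card_fin]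
    rw [Finset.sum_congr rfl (fun f _ => heach f), Finset.sum_const, Finset.card_univ, smul_eq_mul]
    gcongr
    calc Fintype.card {f : Module.Dual F K // f ≠ 0} ≤ Fintype.card (Module.Dual F K) :=
        Fintype.card_subtype_le _
      _ = q ^ d := by rw [card_eq_pow_finrank (K := F), Subspace.dual_finrank_eq]
  exact step1.trans step2

lemma aux_spanning_density :
    Tendsto (fun n : ℕ =>
        (Nat.card {t : Fin n → K // Submodule.span F (Set.range t) = ⊤} : ℝ) /
          (Nat.card (Fin n → K) : ℝ)) atTop (nhds 1) := by
  classical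
  haveI : Finite K := Module.finite_of_finite F
  haveI : Fintype K := Fintype.ofFinite _
  set q := Fintype.card F with hq
  set d := finrank F K with hd
  have hq1 : 1 < q := Fintype.one_lt_card
  have hcardK : Fintype.card K = q ^ d := card_eq_pow_finrank (K := F)
  have htot : ∀ n : ℕ, Nat.card (Fin n → K) = (q ^ d) ^ n := by
    intro n
    rw [Nat.card_eq_fintype_card, Fintype.card_fun, Fintype.card_fin, hcardK]
  have htotpos : ∀ n : ℕ, (0 : ℝ) < (Nat.card (Fin n → K) : ℝ) := by
    intro n
    rw [htot n]
    positivity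
  -- nonspanning ratio
  set u : ℕ → ℝ := fun n =>
    (Nat.card {t : Fin n → K // Submodule.span F (Set.range t) ≠ ⊤} : ℝ) /
      (Nat.card (Fin n → K) : ℝ) with hu
  have hu0 : ∀ n, 0 ≤ u n := fun n => by positivity
  have hub : ∀ n, u n ≤ (q : ℝ) ^ d * ((q : ℝ)⁻¹) ^ n := by
    intro n
    rcases Nat.eq_zero_or_pos d with hd0 | hdpos
    · have : Nat.card {t : Fin n → K // Submodule.span F (Set.range t) ≠ ⊤} = 0 := by
        haveI : Subsingleton K := finrank_zero_iff.1 (hd ▸ hd0)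
        rw [Nat.card_eq_zero]
        left
        refine ⟨fun t => t.2 ?_⟩
        rw [eq_top_iff]
        intro x _
        rw [Subsingleton.elim x 0]
        exact Submodule.zero_mem _
      rw [hu]
      simp only [this, Nat.cast_zero, zero_div]
      positivity
    · have hb := aux_card_nonspanning_le F K n
      rw [hu]
      rw [div_le_iff₀ (htotpos n)]
      calc (Nat.card {t : Fin n → K // Submodule.span F (Set.range t) ≠ ⊤} : ℝ)
          ≤ ((q ^ d * (q ^ (d - 1)) ^ n : ℕ) : ℝ) := by exact_mod_cast hb
        _ = (q : ℝ) ^ d * ((q : ℝ) ^ (d - 1)) ^ n := by push_cast; ring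
        _ = (q : ℝ) ^ d * ((q : ℝ)⁻¹) ^ n * ((q ^ d : ℝ) ^ n) := by
            have hqpos : (0 : ℝ) < q := by exact_mod_cast (Nat.zero_lt_of_lt hq1)
            have hstep : ((q : ℝ) ^ (d - 1)) = (q : ℝ)⁻¹ * (q : ℝ) ^ d := by
              rw [eq_inv_mul_iff_mul_eq₀ (ne_of_gt hqpos), ← pow_succ']
              congr 1
              omega
            rw [hstep]
            ring
        _ = (q : ℝ) ^ d * ((q : ℝ)⁻¹) ^ n * (Nat.card (Fin n → K) : ℝ) := by
            rw [htot n]; push_cast; ring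
  have hu_to_zero : Tendsto u atTop (nhds 0) := by
    refine squeeze_zero hu0 hub ?_
    rw [show (0 : ℝ) = (q : ℝ) ^ d * 0 by ring]
    refine Tendsto.const_mul _ (tendsto_pow_atTop_nhds_zero_of_lt_one (by positivity) ?_)
    rw [inv_lt_one_iff₀]
    right
    exact_mod_cast hq1
  have heq : ∀ n : ℕ, (Nat.card {t : Fin n → K // Submodule.span F (Set.range t) = ⊤} : ℝ) /
      (Nat.card (Fin n → K) : ℝ) = 1 - u n := by
    intro n
    have hsplit : Nat.card {t : Fin n → K // Submodule.span F (Set.range t) = ⊤} +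
        Nat.card {t : Fin n → K // Submodule.span F (Set.range t) ≠ ⊤} =
          Nat.card (Fin n → K) := by
      rw [Nat.card_eq_fintype_card, Nat.card_eq_fintype_card, Nat.card_eq_fintype_card]
      rw [Fintype.card_subtype_compl]
      have hle : Fintype.card {t : Fin n → K // Submodule.span F (Set.range t) = ⊤} ≤
          Fintype.card (Fin n → K) := Fintype.card_subtype_le _
      omega
    have hsub : (Nat.card {t : Fin n → K // Submodule.span F (Set.range t) = ⊤} : ℝ) =
        (Nat.card (Fin n → K) : ℝ) -
          (Nat.card {t : Fin n → K // Submodule.span F (Set.range t) ≠ ⊤} : ℝ) := by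
      push_cast [← hsplit]
      ring
    rw [hsub, sub_div, div_self (ne_of_gt (htotpos n)), hu]
  refine Tendsto.congr (fun n => (heq n).symm) ?_
  have : Tendsto (fun n => 1 - u n) atTop (nhds (1 - 0)) :=
    Tendsto.sub tendsto_const_nhds hu_to_zero
  simpa using this

end Counting

/-- For a full-rank linear system over a finite field, asymptotically almost every
solution in `Fⁿ` is fully dimensional, i.e. its entries span a subspace of the maximal
possible dimension `m − r`. -/
theorem fully_dimensional_solutions_density_tendsto_one (F : Type*) [Field F] [Fintype F]
    (r m : ℕ) (hr : 0 < r) (hrm : r ≤ m) (A : Matrix (Fin r) (Fin m) F)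
    (hA : A.rank = r) :
    Tendsto
      (fun n : ℕ =>
        (Nat.card {s : Fin m → (Fin n → F) //
            (∀ i, ∑ j, A i j • s j = 0) ∧
              Module.finrank F (Submodule.span F (Set.range s)) = m - r} : ℝ) /
          (Nat.card {s : Fin m → (Fin n → F) // ∀ i, ∑ j, A i j • s j = 0} : ℝ))
      atTop (nhds 1) := by
  classical
  set K := LinearMap.ker A.mulVecLin with hKdef
  have hdK : finrank F K = m - r := by
    have h := LinearMap.finrank_range_add_finrank_ker A.mulVecLin
    have h2 : finrank F (Fin m → F) = m := by
      rw [Module.finrank_pi, Fintype.card_fin]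
    have h3 : finrank F (LinearMap.range A.mulVecLin) = r := hA
    rw [h2, h3, ← hKdef] at h
    omega
  refine (aux_spanning_density F K).congr ?_
  intro n
  -- the basic equivalence between solutions and tuples in the kernel
  have memK : ∀ (s : {s : Fin m → (Fin n → F) // ∀ i, ∑ j, A i j • s j = 0}) (k : Fin n),
      (fun j => s.1 j k) ∈ K := by
    intro s k
    rw [hKdef, LinearMap.mem_ker]
    funext i
    have h := congrFun (s.2 i) k
    simpa [Matrix.mulVec, dotProduct, Finset.sum_apply] using h
  set e : {s : Fin m → (Fin n → F) // ∀ i, ∑ j, A i j • s j = 0} ≃ (Fin n → K) :=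
    { toFun := fun s k => ⟨fun j => s.1 j k, memK s k⟩
      invFun := fun t => ⟨fun j k => (t k : Fin m → F) j, by
        intro i
        funext k
        have h := congrFun ((LinearMap.mem_ker).1 (t k).2) i
        simp only [Matrix.mulVecLin_apply, Pi.zero_apply] at h
        simpa [Matrix.mulVec, dotProduct, Finset.sum_apply] using h⟩
      left_inv := fun s => rfl
      right_inv := fun t => rfl } with he
  -- the rank condition corresponds to spanning
  have hiff : ∀ s : {s : Fin m → (Fin n → F) // ∀ i, ∑ j, A i j • s j = 0},
      (Module.finrank F (Submodule.span F (Set.range s.1)) = m - r) ↔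
        Submodule.span F (Set.range (e s)) = ⊤ := by
    intro s
    set t : Fin n → (Fin m → F) := fun k j => s.1 j k with ht
    have h1 : finrank F (Submodule.span F (Set.range s.1)) =
        finrank F (Submodule.span F (Set.range t)) := by
      have h := Matrix.rank_transpose (Matrix.of s.1)
      rw [Matrix.rank_eq_finrank_span_cols, Matrix.rank_eq_finrank_span_cols] at h
      exact h
    have h2 : Submodule.map K.subtype (Submodule.span F (Set.range (e s))) =
        Submodule.span F (Set.range t) := by
      rw [Submodule.map_span]
      congr 1
      rw [← Set.range_comp]
      rfl
    have h3 : Submodule.span F (Set.range (e s)) = ⊤ ↔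
        Submodule.span F (Set.range t) = K := by
      constructor
      · intro h
        rw [← h2, h, Submodule.map_subtype_top]
      · intro h
        apply Submodule.map_injective_of_injective K.injective_subtype
        rw [h2, h, Submodule.map_subtype_top]
    rw [h1, h3]
    constructor
    · intro h
      refine Submodule.eq_of_le_of_finrank_eq ?_ (by rw [h, hdK])
      rw [Submodule.span_le]
      rintro _ ⟨k, rfl⟩
      exact memK s k
    · intro h
      rw [h, hdK]
  -- transfer cardinalities
  have hnum : Nat.card {s : Fin m → (Fin n → F) //
      (∀ i, ∑ j, A i j • s j = 0) ∧
        Module.finrank F (Submodule.span F (Set.range s)) = m - r} =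
      Nat.card {t : Fin n → K // Submodule.span F (Set.range t) = ⊤} := by
    refine Nat.card_congr ?_
    exact ((Equiv.subtypeSubtypeEquivSubtypeInter _ _).symm.trans (e.subtypeEquiv hiff))
  have hden : Nat.card {s : Fin m → (Fin n → F) // ∀ i, ∑ j, A i j • s j = 0} =
      Nat.card (Fin n → K) := Nat.card_congr e
  rw [hnum, hden]
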